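/- arXiv:1701.01998 — 2 statements merged into one kernel-verified Lean document; each statement's English description precedes it below -/
import Mathlib

section
/- Let W ⊆ ℝ² be open and connected and let Φ : W → ℝ² be a C¹ map. Assume that for every w ∈ W there exist sequences h_n → 0⁺ and r_n → 0⁺ with h_n/r_n → 0, points w_n → w with the closed ball B(w_n, r_n) contained in W, vectors a_n, b_n ∈ ℝ², and errors δ_n ≥ 0 with δ_n/h_n → 0, such that for every lattice point x ∈ (h_n ℤ² + a_n) ∩ B(w_n, r_n) the distance from Φ(x) to the set h_n ℤ² + b_n is at most δ_n. Then the derivative DΦ(w) is a 2×2 matrix with integer entries for every w ∈ W, and DΦ is constant on W (equal to a single integer matrix M ∈ M₂(ℤ)). -/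
open Filter Metric

/-- The **asymptotic lattice-mapping property** of a map `Φ` at every point of
a set `W ⊆ ℝ²`: for every `w ∈ W` there are scales `h_n → 0⁺`, radii
`r_n → 0⁺` with `h_n / r_n → 0`, centers `w_n → w` with
`closedBall (w_n, r_n) ⊆ W`, offsets `a_n, b_n ∈ ℝ²` and errors `δ_n ≥ 0` with
`δ_n / h_n → 0`, such that every point of the lattice `h_n ℤ² + a_n` lying in
`closedBall (w_n, r_n)` is mapped by `Φ` within distance `δ_n` of the lattice
`h_n ℤ² + b_n`. -/
def LatticeMappingProperty (Φ : ℝ × ℝ → ℝ × ℝ) (W : Set (ℝ × ℝ)) : Prop :=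
  ∀ w ∈ W, ∃ (hseq rseq δ : ℕ → ℝ) (wseq a b : ℕ → ℝ × ℝ),
    (∀ n, 0 < hseq n) ∧ (∀ n, 0 < rseq n) ∧ (∀ n, 0 ≤ δ n) ∧
    Tendsto hseq atTop (nhds 0) ∧
    Tendsto rseq atTop (nhds 0) ∧
    Tendsto (fun n => hseq n / rseq n) atTop (nhds 0) ∧
    Tendsto (fun n => δ n / hseq n) atTop (nhds 0) ∧
    Tendsto wseq atTop (nhds w) ∧
    (∀ n, closedBall (wseq n) (rseq n) ⊆ W) ∧
    (∀ n, ∀ k : ℤ × ℤ,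
      a n + hseq n • ((k.1 : ℝ), (k.2 : ℝ)) ∈ closedBall (wseq n) (rseq n) →
      ∃ m : ℤ × ℤ,
        ‖Φ (a n + hseq n • ((k.1 : ℝ), (k.2 : ℝ)))
          - (b n + hseq n • ((m.1 : ℝ), (m.2 : ℝ)))‖ ≤ δ n)

private lemma int_valued_const {s : Set (ℝ × ℝ)} (hs : IsPreconnected s)
    {f : ℝ × ℝ → ℝ} (hf : ContinuousOn f s)
    (hint : ∀ x ∈ s, ∃ k : ℤ, f x = k) :
    ∀ x ∈ s, ∀ y ∈ s, f x = f y := by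
  intro x hx y hy
  by_contra hne
  wlog hlt : f x < f y generalizing x y
  · exact this y hy x hx (Ne.symm hne)
      (lt_of_le_of_ne (not_lt.1 hlt) (Ne.symm hne))
  have himg : IsPreconnected (f '' s) := hs.image f hf
  have hord := himg.ordConnected
  obtain ⟨kx, hkx⟩ := hint x hx
  obtain ⟨ky, hky⟩ := hint y hy
  have hklt : kx < ky := by
    have : (kx : ℝ) < ky := by rw [← hkx, ← hky]; exact hlt
    exact_mod_cast this
  have hmem : (kx : ℝ) + 1/2 ∈ f '' s := by
    apply hord.out (Set.mem_image_of_mem f hx) (Set.mem_image_of_mem f hy)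
    constructor
    · rw [hkx]; linarith
    · rw [hky]
      have : (kx : ℝ) + 1 ≤ ky := by exact_mod_cast hklt
      linarith
  obtain ⟨z, hz, hfz⟩ := hmem
  obtain ⟨kz, hkz⟩ := hint z hz
  rw [hkz] at hfz
  have h2 : (2 * kz : ℝ) = 2 * kx + 1 := by push_cast at hfz ⊢; linarith
  have : 2 * kz = 2 * kx + 1 := by exact_mod_cast h2
  omega

private lemma intPairSet_closed :
    IsClosed {x : ℝ × ℝ | (∃ k : ℤ, (k : ℝ) = x.1) ∧ ∃ k : ℤ, (k : ℝ) = x.2} := by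
  have h1 : IsClosed (Set.range ((↑) : ℤ → ℝ)) :=
    Int.isClosedEmbedding_coe_real.isClosed_range
  have : {x : ℝ × ℝ | (∃ k : ℤ, (k : ℝ) = x.1) ∧ ∃ k : ℤ, (k : ℝ) = x.2}
      = (Set.range ((↑) : ℤ → ℝ)) ×ˢ (Set.range ((↑) : ℤ → ℝ)) := by
    ext x; simp [Set.mem_prod, Set.mem_range]
  rw [this]; exact h1.prod h1

private lemma round_coord (a wv H : ℝ) (hH : 0 < H) :
    |a + H * (round ((wv - a) / H) : ℤ) - wv| ≤ H / 2 := by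
  set t := (wv - a) / H with ht
  have hHt : H * t = wv - a := by rw [ht]; field_simp
  have heq : a + H * (round t : ℤ) - wv = H * ((round t : ℤ) - t) := by
    have : a - wv = -(H * t) := by rw [hHt]; ring
    nlinarith [this]
  rw [heq, abs_mul, abs_of_pos hH, abs_sub_comm]
  have := abs_sub_round t
  nlinarith

private lemma column_integer (W : Set (ℝ × ℝ)) (hWopen : IsOpen W)
    (Φ : ℝ × ℝ → ℝ × ℝ) (hΦ : ContDiffOn ℝ 1 Φ W)
    (hlat : LatticeMappingProperty Φ W) (w : ℝ × ℝ) (hw : w ∈ W)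
    (u : ℤ × ℤ) (hu : ‖((u.1 : ℝ), (u.2 : ℝ))‖ ≤ 1) :
    ∃ m : ℤ × ℤ, fderiv ℝ Φ w ((u.1 : ℝ), (u.2 : ℝ)) = ((m.1 : ℝ), (m.2 : ℝ)) := by
  classical
  set D := fderiv ℝ Φ w with hD
  set e : ℝ × ℝ := ((u.1 : ℝ), (u.2 : ℝ)) with he
  have hdiff : ∀ x ∈ W, DifferentiableAt ℝ Φ x := fun x hx =>
    (hΦ.differentiableOn one_ne_zero).differentiableAt (hWopen.mem_nhds hx)
  have hcont : ContinuousOn (fderiv ℝ Φ) W :=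
    hΦ.continuousOn_fderiv_of_isOpen hWopen le_rfl
  -- it suffices to show D e is in the closed set of integer pairs
  suffices hmem : D e ∈ {x : ℝ × ℝ | (∃ k : ℤ, (k : ℝ) = x.1) ∧ ∃ k : ℤ, (k : ℝ) = x.2} by
    obtain ⟨⟨k1, hk1⟩, ⟨k2, hk2⟩⟩ := hmem
    exact ⟨(k1, k2), by rw [Prod.ext_iff]; exact ⟨hk1.symm, hk2.symm⟩⟩
  rw [← intPairSet_closed.closure_eq]
  rw [Metric.mem_closure_iff]
  intro ε hε
  set ε' : ℝ := ε / 4 with hε'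
  have hε'pos : 0 < ε' := by positivity
  -- continuity of the derivative at w
  have hcw := hcont w hw
  rw [Metric.continuousWithinAt_iff] at hcw
  obtain ⟨ρ₁, hρ₁pos, hρ₁⟩ := hcw ε' hε'pos
  obtain ⟨ρ₂, hρ₂pos, hρ₂⟩ := Metric.isOpen_iff.1 hWopen w hw
  set ρ := min ρ₁ ρ₂ with hρ
  have hρpos : 0 < ρ := lt_min hρ₁pos hρ₂pos
  have hballW : ball w ρ ⊆ W := fun x hx => hρ₂ (ball_subset_ball (min_le_right _ _) hx)
  -- the sequences
  obtain ⟨hseq, rseq, δ, wseq, a, b, hhpos, hrpos, hδpos, hh0, hr0, hhr0, hδh0, hwlim,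
    hballs, hkey⟩ := hlat w hw
  -- choose a good index n
  have E1 : ∀ᶠ n in atTop, hseq n / rseq n < 1/2 := hhr0.eventually_lt_const (by norm_num)
  have E2 : ∀ᶠ n in atTop, dist (wseq n) w < ρ/4 :=
    hwlim.eventually (Metric.ball_mem_nhds w (by positivity))
  have E3 : ∀ᶠ n in atTop, rseq n < ρ/4 := hr0.eventually_lt_const (by positivity)
  have E4 : ∀ᶠ n in atTop, δ n / hseq n < ε' := hδh0.eventually_lt_const hε'pos
  obtain ⟨n, ⟨⟨hhr, hwd⟩, hrρ⟩, h4⟩ := (((E1.and E2).and E3).and E4).exists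
  set H := hseq n with hH
  set r := rseq n with hr
  have hHpos : 0 < H := hhpos n
  have hrpos' : 0 < r := hrpos n
  have hHr : H < r / 2 := by
    have := hhr
    rw [div_lt_iff₀ hrpos'] at this
    linarith
  -- the nearest lattice point to wseq n
  set k : ℤ × ℤ := (round (((wseq n).1 - (a n).1) / H), round (((wseq n).2 - (a n).2) / H))
    with hk
  set p : ℝ × ℝ := a n + H • ((k.1 : ℝ), (k.2 : ℝ)) with hp
  have hpw : ‖p - wseq n‖ ≤ H / 2 := by
    rw [Prod.norm_def]
    apply max_le
    · have := round_coord (a n).1 (wseq n).1 H hHpos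
      simpa [hp, hk, Real.norm_eq_abs, Prod.smul_def, smul_eq_mul] using this
    · have := round_coord (a n).2 (wseq n).2 H hHpos
      simpa [hp, hk, Real.norm_eq_abs, Prod.smul_def, smul_eq_mul] using this
  have hpin : p ∈ closedBall (wseq n) r := by
    rw [mem_closedBall, dist_eq_norm]
    calc ‖p - wseq n‖ ≤ H / 2 := hpw
      _ ≤ r := by linarith
  set q : ℝ × ℝ := a n + H • (((k.1 + u.1 : ℤ) : ℝ), ((k.2 + u.2 : ℤ) : ℝ)) with hq
  have hqp : q = p + H • e := by
    rw [hq, hp, he]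
    push_cast
    ext
    · simp [Prod.smul_def, smul_eq_mul]; try ring
    · simp [Prod.smul_def, smul_eq_mul]; try ring
  have hqin : q ∈ closedBall (wseq n) r := by
    rw [mem_closedBall, dist_eq_norm, hqp]
    have : p + H • e - wseq n = (p - wseq n) + H • e := by abel
    rw [this]
    calc ‖(p - wseq n) + H • e‖ ≤ ‖p - wseq n‖ + ‖H • e‖ := norm_add_le _ _
      _ ≤ H / 2 + H * 1 := by
          gcongr
          rw [norm_smul, Real.norm_eq_abs, abs_of_pos hHpos]
          exact mul_le_mul_of_nonneg_left hu hHpos.le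
      _ ≤ r := by linarith
  -- the closed ball lies inside ball w ρ
  have hsub : closedBall (wseq n) r ⊆ ball w ρ := by
    intro x hx
    rw [mem_closedBall] at hx
    rw [mem_ball]
    calc dist x w ≤ dist x (wseq n) + dist (wseq n) w := dist_triangle _ _ _
      _ ≤ r + ρ/4 := by gcongr
      _ < ρ := by linarith
  have hsubW : closedBall (wseq n) r ⊆ W := fun x hx => hballW (hsub hx)
  -- mean value estimate for Φ - D on the closed ball
  have hderiv : ∀ x ∈ closedBall (wseq n) r,
      HasFDerivWithinAt (fun y => Φ y - D y) (fderiv ℝ Φ x - D) (closedBall (wseq n) r) x :=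
    fun x hx =>
      (((hdiff x (hsubW hx)).hasFDerivAt).sub D.hasFDerivAt).hasFDerivWithinAt
  have hbound : ∀ x ∈ closedBall (wseq n) r, ‖fderiv ℝ Φ x - D‖ ≤ ε' := by
    intro x hx
    have hxb := hsub hx
    have hxW := hballW hxb
    have hxd : dist x w < ρ₁ := lt_of_lt_of_le (mem_ball.1 hxb) (min_le_left _ _)
    have := hρ₁ hxW hxd
    rw [dist_eq_norm] at this
    exact this.le
  have hmvt := (convex_closedBall (wseq n) r).norm_image_sub_le_of_norm_hasFDerivWithin_le
    hderiv hbound hpin hqin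
  -- rewrite the mean value estimate
  have hqpdiff : q - p = H • e := by rw [hqp]; abel
  have hDdiff : D q - D p = H • D e := by
    rw [← map_sub, hqpdiff, map_smul]
  have hA : ‖Φ q - Φ p - H • D e‖ ≤ ε' * H := by
    have h1 : Φ q - D q - (Φ p - D p) = Φ q - Φ p - H • D e := by
      rw [← hDdiff]; abel
    rw [h1] at hmvt
    calc ‖Φ q - Φ p - H • D e‖ ≤ ε' * ‖q - p‖ := hmvt
      _ ≤ ε' * (H * 1) := by
          gcongr
          rw [hqpdiff, norm_smul, Real.norm_eq_abs, abs_of_pos hHpos]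
          exact mul_le_mul_of_nonneg_left hu hHpos.le
      _ = ε' * H := by ring
  -- the lattice property at p and q
  obtain ⟨m, hm⟩ := hkey n k hpin
  obtain ⟨m', hm'⟩ := hkey n (k + u) (by
    have : (((k+u).1 : ℤ) : ℝ) = ((k.1 + u.1 : ℤ) : ℝ) ∧
        (((k+u).2 : ℤ) : ℝ) = ((k.2 + u.2 : ℤ) : ℝ) := by constructor <;> rfl
    rw [Prod.fst_add, Prod.snd_add]
    exact hqin)
  rw [← hp] at hm
  have hm'2 : ‖Φ q - (b n + H • ((m'.1 : ℝ), (m'.2 : ℝ)))‖ ≤ δ n := by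
    convert hm' using 4 <;> simp [hq, hH]
  -- combine everything
  set y : ℝ × ℝ := (((m'.1 - m.1 : ℤ) : ℝ), ((m'.2 - m.2 : ℤ) : ℝ)) with hy
  refine ⟨y, ⟨⟨m'.1 - m.1, rfl⟩, ⟨m'.2 - m.2, rfl⟩⟩, ?_⟩
  have hyc : (y : ℝ × ℝ) = ((m'.1 : ℝ), (m'.2 : ℝ)) - ((m.1 : ℝ), (m.2 : ℝ)) := by
    rw [hy]; push_cast; rfl
  have hkey2 : H • (D e - y) =
      (Φ q - (b n + H • ((m'.1 : ℝ), (m'.2 : ℝ))))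
      - (Φ p - (b n + H • ((m.1 : ℝ), (m.2 : ℝ))))
      - (Φ q - Φ p - H • D e) := by
    rw [hyc]
    module
  have hnorm : H * ‖D e - y‖ ≤ δ n + δ n + ε' * H := by
    have h2 : ‖H • (D e - y)‖ = H * ‖D e - y‖ := by
      rw [norm_smul, Real.norm_eq_abs, abs_of_pos hHpos]
    rw [← h2, hkey2]
    refine le_trans (norm_sub_le _ _) ?_
    exact add_le_add (le_trans (norm_sub_le _ _) (add_le_add hm'2 hm)) hA
  rw [dist_eq_norm]
  have hδH : δ n < ε' * H := by
    have := h4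
    rw [div_lt_iff₀ hHpos] at this
    exact this
  have : ‖D e - y‖ ≤ (δ n + δ n + ε' * H) / H := by
    rw [le_div_iff₀ hHpos]
    linarith [hnorm]
  calc ‖D e - y‖ ≤ (δ n + δ n + ε' * H) / H := this
    _ < ε := by
        rw [div_lt_iff₀ hHpos]
        have hεH : 0 < ε * H := by positivity
        nlinarith [hδH, hHpos, hε]

/-- **Lattice rigidity** (underlying Proposition 4.2): a `C¹` map `Φ` on a
connected open set `W ⊆ ℝ²` which asymptotically maps rescaled lattices
`h ℤ²` (up to translations and `o(h)` errors, over balls large compared to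
`h`) to rescaled lattices has, at every point, an integer `2×2` matrix as its
derivative, and this derivative is constant on `W`. -/
theorem lattice_rigidity_constant_integer_derivative
    (W : Set (ℝ × ℝ)) (hWopen : IsOpen W) (hWconn : IsConnected W)
    (Φ : ℝ × ℝ → ℝ × ℝ) (hΦ : ContDiffOn ℝ 1 Φ W)
    (hlat : LatticeMappingProperty Φ W) :
    ∃ M : Matrix (Fin 2) (Fin 2) ℤ,
      ∀ w ∈ W, ∀ v : ℝ × ℝ,
        fderiv ℝ Φ w v =
          (((M 0 0 : ℝ) * v.1 + (M 0 1 : ℝ) * v.2),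
           ((M 1 0 : ℝ) * v.1 + (M 1 1 : ℝ) * v.2)) := by
  obtain ⟨w₀, hw₀⟩ := hWconn.nonempty
  have hcont : ContinuousOn (fderiv ℝ Φ) W :=
    hΦ.continuousOn_fderiv_of_isOpen hWopen le_rfl
  -- the two columns of the derivative are integer vectors, at every point
  have key1 : ∀ w ∈ W, ∃ m : ℤ × ℤ,
      fderiv ℝ Φ w ((1 : ℝ), (0 : ℝ)) = ((m.1 : ℝ), (m.2 : ℝ)) := by
    intro w hw
    have := column_integer W hWopen Φ hΦ hlat w hw ((1 : ℤ), (0 : ℤ))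
      (by simp [Prod.norm_def])
    simpa using this
  have key2 : ∀ w ∈ W, ∃ m : ℤ × ℤ,
      fderiv ℝ Φ w ((0 : ℝ), (1 : ℝ)) = ((m.1 : ℝ), (m.2 : ℝ)) := by
    intro w hw
    have := column_integer W hWopen Φ hΦ hlat w hw ((0 : ℤ), (1 : ℤ))
      (by simp [Prod.norm_def])
    simpa using this
  -- continuity of the four entry functions
  have hc : ∀ v : ℝ × ℝ, ContinuousOn (fun w => fderiv ℝ Φ w v) W :=
    fun v => (ContinuousLinearMap.apply ℝ (ℝ × ℝ) v).continuous.comp_continuousOn hcont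
  have hc1 : ∀ v : ℝ × ℝ, ContinuousOn (fun w => (fderiv ℝ Φ w v).1) W :=
    fun v => continuous_fst.comp_continuousOn (hc v)
  have hc2 : ∀ v : ℝ × ℝ, ContinuousOn (fun w => (fderiv ℝ Φ w v).2) W :=
    fun v => continuous_snd.comp_continuousOn (hc v)
  -- constancy of the four entry functions
  have hconst : ∀ (v : ℝ × ℝ),
      (∀ x ∈ W, ∃ m : ℤ × ℤ, fderiv ℝ Φ x v = ((m.1 : ℝ), (m.2 : ℝ))) →
      ∀ w ∈ W, fderiv ℝ Φ w v = fderiv ℝ Φ w₀ v := by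
    intro v hv w hw
    have e1 := int_valued_const hWconn.isPreconnected (hc1 v)
      (fun x hx => by obtain ⟨m, hm⟩ := hv x hx; exact ⟨m.1, by rw [hm]⟩) w hw w₀ hw₀
    have e2 := int_valued_const hWconn.isPreconnected (hc2 v)
      (fun x hx => by obtain ⟨m, hm⟩ := hv x hx; exact ⟨m.2, by rw [hm]⟩) w hw w₀ hw₀
    exact Prod.ext_iff.2 ⟨e1, e2⟩
  obtain ⟨m₁, hm₁⟩ := key1 w₀ hw₀
  obtain ⟨m₂, hm₂⟩ := key2 w₀ hw₀
  refine ⟨!![m₁.1, m₂.1; m₁.2, m₂.2], ?_⟩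
  intro w hw v
  have hDe1 : fderiv ℝ Φ w ((1 : ℝ), (0 : ℝ)) = ((m₁.1 : ℝ), (m₁.2 : ℝ)) :=
    (hconst _ key1 w hw).trans hm₁
  have hDe2 : fderiv ℝ Φ w ((0 : ℝ), (1 : ℝ)) = ((m₂.1 : ℝ), (m₂.2 : ℝ)) :=
    (hconst _ key2 w hw).trans hm₂
  have hsplit : fderiv ℝ Φ w v =
      v.1 • fderiv ℝ Φ w ((1 : ℝ), (0 : ℝ)) + v.2 • fderiv ℝ Φ w ((0 : ℝ), (1 : ℝ)) := by
    conv_lhs => rw [show v = v.1 • ((1 : ℝ), (0 : ℝ)) + v.2 • ((0 : ℝ), (1 : ℝ)) by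
      ext <;> simp]
    rw [map_add, map_smul, map_smul]
  rw [hsplit, hDe1, hDe2]
  ext
  · simp [Prod.smul_def, smul_eq_mul, Matrix.cons_val_zero, Matrix.cons_val_one,
      Matrix.head_cons]
    ring
  · simp [Prod.smul_def, smul_eq_mul, Matrix.cons_val_zero, Matrix.cons_val_one,
      Matrix.head_cons]
    ring
end

section
/- Let W ⊆ ℝ² be open and connected and let Φ : W → ℝ² be a C¹ diffeomorphism onto its (open) image Φ(W). Assume that Φ satisfies the asymptotic lattice-mapping property at every point of W: for every w ∈ W there exist sequences h_n → 0⁺ and r_n → 0⁺ with h_n/r_n → 0, points w_n → w with B(w_n, r_n) ⊆ W, vectors a_n, b_n ∈ ℝ², and errors δ_n ≥ 0 with δ_n/h_n → 0, such that dist(Φ(x), h_n ℤ² + b_n) ≤ δ_n for every x ∈ (h_n ℤ² + a_n) ∩ B(w_n, r_n). Assume in addition that the inverse map Φ⁻¹ : Φ(W) → W satisfies the same asymptotic lattice-mapping property at every point of Φ(W). Then there is a single matrix M ∈ GL(2, ℤ) (an integer 2×2 matrix with determinant ±1) such that DΦ(w) = M for all w ∈ W. -/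
open Filter Metric

/-- Two distinct integer vectors in `ℝ²` are at distance at least 1. -/
theorem int_pair_one_le (p q : ℤ × ℤ) (h : p ≠ q) :
    (1:ℝ) ≤ ‖((((p.1:ℝ), (p.2:ℝ)) : ℝ × ℝ) - ((q.1:ℝ), (q.2:ℝ)))‖ := by
  have h' : p.1 ≠ q.1 ∨ p.2 ≠ q.2 := by
    by_contra hc; push_neg at hc; exact h (Prod.ext hc.1 hc.2)
  rw [Prod.norm_def]
  rcases h' with h' | h'
  · refine le_max_of_le_left ?_
    simp only [Prod.fst_sub, Real.norm_eq_abs]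
    have e : ((p.1 - q.1 : ℤ) : ℝ) = (p.1:ℝ) - q.1 := by push_cast; ring
    rw [← e, ← Int.cast_abs]
    exact_mod_cast Int.one_le_abs (sub_ne_zero.mpr h')
  · refine le_max_of_le_right ?_
    simp only [Prod.snd_sub, Real.norm_eq_abs]
    have e : ((p.2 - q.2 : ℤ) : ℝ) = (p.2:ℝ) - q.2 := by push_cast; ring
    rw [← e, ← Int.cast_abs]
    exact_mod_cast Int.one_le_abs (sub_ne_zero.mpr h')

/-- A continuous integer-valued function on a preconnected set is constant. -/
theorem const_of_int {W : Set (ℝ × ℝ)} (hconn : IsPreconnected W) (g : ℝ × ℝ → ℝ)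
    (hg : ContinuousOn g W) (hint : ∀ w ∈ W, ∃ k : ℤ, g w = k) :
    ∀ w ∈ W, ∀ w' ∈ W, g w = g w' := by
  have main : ∀ w ∈ W, ∀ w' ∈ W, g w < g w' → False := by
    intro w hw w' hw' hlt
    obtain ⟨k, hk⟩ := hint w hw
    obtain ⟨k', hk'⟩ := hint w' hw'
    have hkk : k < k' := by exact_mod_cast hk ▸ hk' ▸ hlt
    have hk1 : (k:ℝ) + 1 ≤ (k':ℝ) := by exact_mod_cast Int.add_one_le_iff.mpr hkk
    have hmem : (k:ℝ) + 1/2 ∈ Set.Icc (g w) (g w') := by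
      constructor
      · rw [hk]; linarith
      · rw [hk']; linarith
    obtain ⟨z, hz, hgz⟩ := hconn.intermediate_value hw hw' hg hmem
    obtain ⟨k'', hk''⟩ := hint z hz
    rw [hk''] at hgz
    have : (2 * k'' : ℤ) = 2 * k + 1 := by exact_mod_cast (by linarith : (2*(k'':ℝ)) = 2*k+1)
    omega
  intro w hw w' hw'
  rcases lt_trichotomy (g w) (g w') with h | h | h
  · exact absurd h (fun h => main w hw w' hw' h)
  · exact h
  · exact absurd h (fun h => main w' hw' w hw h)

/-- The key analytic rigidity lemma: at any point of `W`, the derivative of a `C¹`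
map satisfying the asymptotic lattice-mapping property maps integer unit vectors
to integer vectors. -/
theorem fderiv_maps_int {W : Set (ℝ × ℝ)} (hWopen : IsOpen W) {Φ : ℝ × ℝ → ℝ × ℝ}
    (hΦ : ContDiffOn ℝ 1 Φ W) (hlat : LatticeMappingProperty Φ W)
    {w : ℝ × ℝ} (hw : w ∈ W) (j : ℤ × ℤ) (hj : ‖(((j.1:ℝ), (j.2:ℝ)) : ℝ × ℝ)‖ = 1) :
    ∃ m : ℤ × ℤ, fderiv ℝ Φ w ((j.1:ℝ), (j.2:ℝ)) = ((m.1:ℝ), (m.2:ℝ)) := by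
  set jv : ℝ × ℝ := ((j.1:ℝ), (j.2:ℝ)) with hjv
  set A := fderiv ℝ Φ w with hA
  have hdiff : ∀ z ∈ W, DifferentiableAt ℝ Φ z := fun z hz =>
    (hΦ.differentiableOn one_ne_zero).differentiableAt (hWopen.mem_nhds hz)
  have hcont : ContinuousOn (fderiv ℝ Φ) W :=
    hΦ.continuousOn_fderiv_of_isOpen hWopen le_rfl
  have key : ∀ ε > (0:ℝ), ∃ m : ℤ × ℤ, ‖A jv - ((m.1:ℝ), (m.2:ℝ))‖ ≤ ε := by
    intro ε hε
    set ε' := ε / 3 with hε'def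
    have hε' : 0 < ε' := by positivity
    obtain ⟨hseq, rseq, δ, wseq, a, b, hpos, rpos, δnn, hh0, hr0, hhr, hδh, hwlim, hball, hmap⟩ :=
      hlat w hw
    have hca : ContinuousAt (fderiv ℝ Φ) w := hcont.continuousAt (hWopen.mem_nhds hw)
    obtain ⟨ρ₁, hρ₁, hρf⟩ := Metric.continuousAt_iff.mp hca ε' hε'
    obtain ⟨ρ₂, hρ₂, hρ₂W⟩ := Metric.isOpen_iff.mp hWopen w hw
    set ρ := min ρ₁ ρ₂ / 2 with hρdef
    have hρ : 0 < ρ := div_pos (lt_min hρ₁ hρ₂) two_pos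
    have hm1 := min_le_left ρ₁ ρ₂
    have hm2 := min_le_right ρ₁ ρ₂
    have hρle1 : ρ < ρ₁ := by rw [hρdef]; linarith
    have hρle2 : ρ < ρ₂ := by rw [hρdef]; linarith
    have hsubW : closedBall w ρ ⊆ W :=
      (closedBall_subset_ball hρle2).trans hρ₂W
    have hder : ∀ z ∈ closedBall w ρ, ‖fderiv ℝ Φ z - A‖ ≤ ε' := by
      intro z hz
      have hz1 : dist z w < ρ₁ := lt_of_le_of_lt (mem_closedBall.mp hz) hρle1
      have := hρf hz1
      rw [dist_eq_norm] at this
      exact this.le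
    have ev : ∀ (f : ℕ → ℝ), Tendsto f atTop (nhds 0) → ∀ c : ℝ, 0 < c →
        ∀ᶠ n in atTop, f n < c := by
      intro f hf c hc
      filter_upwards [Metric.tendsto_nhds.mp hf c hc] with n hn
      rw [Real.dist_eq, sub_zero] at hn
      exact lt_of_abs_lt hn
    obtain ⟨n, hd, hh, hhr2, hδε⟩ :=
      ((Metric.tendsto_nhds.mp hwlim (ρ/4) (by positivity)).and
        ((ev hseq hh0 (ρ/4) (by positivity)).and
          ((ev _ hhr (1/2) one_half_pos).and (ev _ hδh ε' hε')))).exists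
    have hps : 0 < hseq n := hpos n
    have hrs : 0 < rseq n := rpos n
    have hhalfr : hseq n < rseq n / 2 := by
      rw [div_lt_iff₀ hrs] at hhr2; linarith
    have hδlt : δ n < ε' * hseq n := by
      rw [div_lt_iff₀ hps] at hδε; linarith
    set k : ℤ × ℤ := (round (((wseq n).1 - (a n).1) / hseq n),
                      round (((wseq n).2 - (a n).2) / hseq n)) with hk
    set x : ℝ × ℝ := a n + hseq n • ((k.1:ℝ), (k.2:ℝ)) with hx
    set k' : ℤ × ℤ := (k.1 + j.1, k.2 + j.2) with hk'
    set x' : ℝ × ℝ := a n + hseq n • ((k'.1:ℝ), (k'.2:ℝ)) with hx'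
    have hco : ∀ (c u : ℝ), |u + hseq n * (round ((c - u)/hseq n) : ℤ) - c| ≤ hseq n/2 := by
      intro c u
      have e : u + hseq n * (round ((c - u)/hseq n) : ℤ) - c
          = hseq n * ((round ((c-u)/hseq n) : ℤ) - (c-u)/hseq n) := by
        field_simp
        ring
      rw [e, abs_mul, abs_of_pos hps]
      have h2 := abs_sub_round ((c-u)/hseq n)
      rw [abs_sub_comm] at h2
      nlinarith
    have hx1 : x.1 = (a n).1 + hseq n * (k.1:ℝ) := by simp [hx]
    have hx2 : x.2 = (a n).2 + hseq n * (k.2:ℝ) := by simp [hx]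
    have hxwn : dist x (wseq n) ≤ hseq n / 2 := by
      rw [Prod.dist_eq]
      refine max_le ?_ ?_
      · rw [Real.dist_eq, hx1]; exact hco (wseq n).1 (a n).1
      · rw [Real.dist_eq, hx2]; exact hco (wseq n).2 (a n).2
    have hx'x : x' - x = hseq n • jv := by
      rw [hx', hx, add_sub_add_left_eq_sub, ← smul_sub]
      congr 1
      rw [hjv]
      simp only [hk', Prod.mk_sub_mk, Prod.mk.injEq]
      constructor <;> push_cast <;> ring
    have hnx'x : ‖x' - x‖ = hseq n := by
      rw [hx'x, norm_smul, Real.norm_eq_abs, abs_of_pos hps, hj, mul_one]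
    have hxx' : dist x' x = hseq n := by rw [dist_eq_norm, hnx'x]
    have hx'wn : dist x' (wseq n) ≤ 3 * hseq n / 2 := by
      calc dist x' (wseq n) ≤ dist x' x + dist x (wseq n) := dist_triangle _ _ _
        _ ≤ hseq n + hseq n / 2 := by rw [hxx']; linarith
        _ = 3 * hseq n / 2 := by ring
    have hxmem : x ∈ closedBall (wseq n) (rseq n) := by
      rw [mem_closedBall]; linarith
    have hx'mem : x' ∈ closedBall (wseq n) (rseq n) := by
      rw [mem_closedBall]; linarith
    have hxρ : x ∈ closedBall w ρ := by
      rw [mem_closedBall]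
      calc dist x w ≤ dist x (wseq n) + dist (wseq n) w := dist_triangle _ _ _
        _ ≤ hseq n / 2 + ρ/4 := by linarith
        _ ≤ ρ := by linarith
    have hx'ρ : x' ∈ closedBall w ρ := by
      rw [mem_closedBall]
      calc dist x' w ≤ dist x' (wseq n) + dist (wseq n) w := dist_triangle _ _ _
        _ ≤ 3 * hseq n / 2 + ρ/4 := by linarith
        _ ≤ ρ := by linarith
    obtain ⟨m, hm⟩ := hmap n k hxmem
    obtain ⟨m', hm'⟩ := hmap n k' hx'mem
    have hmvt := (convex_closedBall w ρ).norm_image_sub_le_of_norm_fderiv_le'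
      (fun z hz => hdiff z (hsubW hz)) hder hxρ hx'ρ
    rw [hx'x, map_smul, norm_smul, Real.norm_eq_abs, abs_of_pos hps, hj, mul_one] at hmvt
    set mv : ℝ × ℝ := ((m.1:ℝ), (m.2:ℝ)) with hmv
    set m'v : ℝ × ℝ := ((m'.1:ℝ), (m'.2:ℝ)) with hm'v
    set dvec : ℝ × ℝ := (((m'.1 - m.1 : ℤ):ℝ), ((m'.2 - m.2 : ℤ):ℝ)) with hdvec
    refine ⟨(m'.1 - m.1, m'.2 - m.2), ?_⟩
    show ‖A jv - dvec‖ ≤ ε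
    have hdv : dvec = m'v - mv := by
      rw [hdvec, hm'v, hmv]
      simp only [Prod.mk_sub_mk, Prod.mk.injEq]
      constructor <;> push_cast <;> ring
    have hiden : hseq n • (A jv - dvec) =
        ((Φ x' - (b n + hseq n • m'v)) - (Φ x - (b n + hseq n • mv)))
          - (Φ x' - Φ x - hseq n • (A jv)) := by
      rw [hdv, smul_sub, smul_sub]
      abel
    have h1 : ‖hseq n • (A jv - dvec)‖ ≤ δ n + δ n + ε' * hseq n := by
      rw [hiden]
      calc ‖((Φ x' - (b n + hseq n • m'v)) - (Φ x - (b n + hseq n • mv)))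
            - (Φ x' - Φ x - hseq n • (A jv))‖
          ≤ ‖(Φ x' - (b n + hseq n • m'v)) - (Φ x - (b n + hseq n • mv))‖
            + ‖Φ x' - Φ x - hseq n • (A jv)‖ := norm_sub_le _ _
        _ ≤ (‖Φ x' - (b n + hseq n • m'v)‖ + ‖Φ x - (b n + hseq n • mv)‖)
            + ε' * hseq n := add_le_add (norm_sub_le _ _) hmvt
        _ ≤ δ n + δ n + ε' * hseq n := by
            have := hm
            have := hm'
            gcongr <;> assumption
    have hbound : hseq n * ‖A jv - dvec‖ ≤ δ n + δ n + ε' * hseq n := by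
      rwa [norm_smul, Real.norm_eq_abs, abs_of_pos hps] at h1
    have hfin : hseq n * ‖A jv - dvec‖ ≤ hseq n * ε := by
      calc hseq n * ‖A jv - dvec‖ ≤ δ n + δ n + ε' * hseq n := hbound
        _ ≤ ε' * hseq n + ε' * hseq n + ε' * hseq n := by linarith
        _ = hseq n * ε := by rw [hε'def]; ring
    exact le_of_mul_le_mul_left hfin hps
  obtain ⟨m₀, hm₀⟩ := key (1/4) (by norm_num)
  refine ⟨m₀, ?_⟩
  have hall : ∀ ε > (0:ℝ), ‖A jv - ((m₀.1:ℝ), (m₀.2:ℝ))‖ ≤ ε := by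
    intro ε hε
    obtain ⟨m, hm⟩ := key (min ε (1/4)) (lt_min hε (by norm_num))
    have hmin : ‖A jv - ((m.1:ℝ), (m.2:ℝ))‖ ≤ 1/4 := hm.trans (min_le_right _ _)
    have hmeq : m = m₀ := by
      by_contra hne
      have h1 := int_pair_one_le m m₀ hne
      have h2 : ‖((((m.1:ℝ), (m.2:ℝ)) : ℝ × ℝ) - ((m₀.1:ℝ), (m₀.2:ℝ)))‖ ≤ 1/2 := by
        calc ‖((((m.1:ℝ), (m.2:ℝ)) : ℝ × ℝ) - ((m₀.1:ℝ), (m₀.2:ℝ)))‖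
            = ‖(A jv - ((m₀.1:ℝ), (m₀.2:ℝ))) - (A jv - ((m.1:ℝ), (m.2:ℝ)))‖ := by
              congr 1; abel
          _ ≤ ‖A jv - ((m₀.1:ℝ), (m₀.2:ℝ))‖ + ‖A jv - ((m.1:ℝ), (m.2:ℝ))‖ := norm_sub_le _ _
          _ ≤ 1/4 + 1/4 := add_le_add hm₀ hmin
          _ = 1/2 := by norm_num
      linarith
    rw [hmeq] at hm
    exact hm.trans (min_le_left _ _)
  have hzero : ‖A jv - ((m₀.1:ℝ), (m₀.2:ℝ))‖ = 0 := by
    by_contra hne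
    have hp : 0 < ‖A jv - ((m₀.1:ℝ), (m₀.2:ℝ))‖ := lt_of_le_of_ne (norm_nonneg _) (Ne.symm hne)
    linarith [hall _ (half_pos hp)]
  exact sub_eq_zero.mp (norm_eq_zero.mp hzero)

/-- **Proposition 4.2**: if `Φ` is a `C¹` diffeomorphism of a connected open
set `W ⊆ ℝ²` onto its open image, and both `Φ` and its inverse `Ψ = Φ⁻¹`
satisfy the asymptotic lattice-mapping property (on `W` and `Φ '' W`
respectively), then there is a single matrix `M ∈ GL(2, ℤ)` (an integer `2×2`
matrix with determinant `±1`, i.e. invertible over `ℤ`) such that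
`DΦ(w) = M` for all `w ∈ W`. -/
theorem lattice_rigidity_GL2Z
    (W : Set (ℝ × ℝ)) (hWopen : IsOpen W) (hWconn : IsConnected W)
    (Φ Ψ : ℝ × ℝ → ℝ × ℝ)
    (hΦ : ContDiffOn ℝ 1 Φ W)
    (hΦinj : Set.InjOn Φ W)
    (himage : IsOpen (Φ '' W))
    (hΨ : ContDiffOn ℝ 1 Ψ (Φ '' W))
    (hΨΦ : ∀ w ∈ W, Ψ (Φ w) = w)
    (hlatΦ : LatticeMappingProperty Φ W)
    (hlatΨ : LatticeMappingProperty Ψ (Φ '' W)) :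
    ∃ M : Matrix (Fin 2) (Fin 2) ℤ,
      IsUnit M.det ∧
      ∀ w ∈ W, ∀ v : ℝ × ℝ,
        fderiv ℝ Φ w v =
          (((M 0 0 : ℝ) * v.1 + (M 0 1 : ℝ) * v.2),
           ((M 1 0 : ℝ) * v.1 + (M 1 1 : ℝ) * v.2)) := by
  obtain ⟨⟨w₀, hw₀⟩, hpre⟩ := hWconn
  -- derivative entries are integers, at every point
  have hint10 : ∀ z ∈ W, ∃ mz : ℤ × ℤ,
      fderiv ℝ Φ z ((1:ℝ), (0:ℝ)) = ((mz.1:ℝ), (mz.2:ℝ)) := by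
    intro z hz
    obtain ⟨mz, hmz⟩ := fderiv_maps_int hWopen hΦ hlatΦ hz (1, 0) (by simp [Prod.norm_def])
    exact ⟨mz, by simpa using hmz⟩
  have hint01 : ∀ z ∈ W, ∃ mz : ℤ × ℤ,
      fderiv ℝ Φ z ((0:ℝ), (1:ℝ)) = ((mz.1:ℝ), (mz.2:ℝ)) := by
    intro z hz
    obtain ⟨mz, hmz⟩ := fderiv_maps_int hWopen hΦ hlatΦ hz (0, 1) (by simp [Prod.norm_def])
    exact ⟨mz, by simpa using hmz⟩
  obtain ⟨c1, hc1⟩ := hint10 w₀ hw₀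
  obtain ⟨c2, hc2⟩ := hint01 w₀ hw₀
  -- entries of the derivative of the inverse are integers at Φ w₀
  have hw₀im : Φ w₀ ∈ Φ '' W := ⟨w₀, hw₀, rfl⟩
  obtain ⟨d1, hd1⟩ := fderiv_maps_int himage hΨ hlatΨ hw₀im (1, 0) (by simp [Prod.norm_def])
  obtain ⟨d2, hd2⟩ := fderiv_maps_int himage hΨ hlatΨ hw₀im (0, 1) (by simp [Prod.norm_def])
  have hd1' : fderiv ℝ Ψ (Φ w₀) ((1:ℝ), (0:ℝ)) = ((d1.1:ℝ), (d1.2:ℝ)) := by simpa using hd1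
  have hd2' : fderiv ℝ Ψ (Φ w₀) ((0:ℝ), (1:ℝ)) = ((d2.1:ℝ), (d2.2:ℝ)) := by simpa using hd2
  -- chain rule: DΨ(Φ w₀) ∘ DΦ(w₀) = id
  have hΦdiff : ∀ z ∈ W, DifferentiableAt ℝ Φ z := fun z hz =>
    (hΦ.differentiableOn one_ne_zero).differentiableAt (hWopen.mem_nhds hz)
  have hΨdiff : DifferentiableAt ℝ Ψ (Φ w₀) :=
    (hΨ.differentiableOn one_ne_zero).differentiableAt (himage.mem_nhds hw₀im)
  have hAd : HasFDerivAt Φ (fderiv ℝ Φ w₀) w₀ := (hΦdiff w₀ hw₀).hasFDerivAt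
  have hBd : HasFDerivAt Ψ (fderiv ℝ Ψ (Φ w₀)) (Φ w₀) := hΨdiff.hasFDerivAt
  have hcomp : HasFDerivAt (Ψ ∘ Φ) ((fderiv ℝ Ψ (Φ w₀)).comp (fderiv ℝ Φ w₀)) w₀ :=
    hBd.comp w₀ hAd
  have hidloc : (id : ℝ × ℝ → ℝ × ℝ) =ᶠ[nhds w₀] (Ψ ∘ Φ) := by
    filter_upwards [hWopen.mem_nhds hw₀] with z hz
    exact (hΨΦ z hz).symm
  have hidd : HasFDerivAt (id : ℝ × ℝ → ℝ × ℝ)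
      ((fderiv ℝ Ψ (Φ w₀)).comp (fderiv ℝ Φ w₀)) w₀ :=
    hcomp.congr_of_eventuallyEq hidloc
  have hBA : (fderiv ℝ Ψ (Φ w₀)).comp (fderiv ℝ Φ w₀) = ContinuousLinearMap.id ℝ (ℝ × ℝ) :=
    hidd.unique (hasFDerivAt_id w₀)
  -- expanding a linear map on the standard basis
  have happ : ∀ (T : (ℝ × ℝ) →L[ℝ] (ℝ × ℝ)) (x y : ℝ),
      T (x, y) = x • T ((1:ℝ), (0:ℝ)) + y • T ((0:ℝ), (1:ℝ)) := by
    intro T x y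
    have hxy : ((x, y) : ℝ × ℝ) = x • ((1:ℝ), (0:ℝ)) + y • ((0:ℝ), (1:ℝ)) := by
      simp [Prod.ext_iff]
    rw [hxy, map_add, map_smul, map_smul]
  have happ' : ∀ (T : (ℝ × ℝ) →L[ℝ] (ℝ × ℝ)) (v : ℝ × ℝ),
      T v = v.1 • T ((1:ℝ), (0:ℝ)) + v.2 • T ((0:ℝ), (1:ℝ)) := by
    intro T v
    conv_lhs => rw [show v = (v.1, v.2) from rfl]
    exact happ T v.1 v.2
  -- the four scalar identities coming from DΨ ∘ DΦ = id
  have hBAe1 : fderiv ℝ Ψ (Φ w₀) (fderiv ℝ Φ w₀ ((1:ℝ), (0:ℝ))) = ((1:ℝ), (0:ℝ)) := by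
    have := congrArg (fun T : (ℝ × ℝ) →L[ℝ] (ℝ × ℝ) => T ((1:ℝ), (0:ℝ))) hBA
    simpa using this
  have hBAe2 : fderiv ℝ Ψ (Φ w₀) (fderiv ℝ Φ w₀ ((0:ℝ), (1:ℝ))) = ((0:ℝ), (1:ℝ)) := by
    have := congrArg (fun T : (ℝ × ℝ) →L[ℝ] (ℝ × ℝ) => T ((0:ℝ), (1:ℝ))) hBA
    simpa using this
  have he1 : (c1.1:ℝ) • (((d1.1:ℝ), (d1.2:ℝ)) : ℝ × ℝ)
      + (c1.2:ℝ) • (((d2.1:ℝ), (d2.2:ℝ)) : ℝ × ℝ) = ((1:ℝ), (0:ℝ)) := by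
    rw [← hd1', ← hd2', ← happ]
    rw [← hc1]
    exact hBAe1
  have he2 : (c2.1:ℝ) • (((d1.1:ℝ), (d1.2:ℝ)) : ℝ × ℝ)
      + (c2.2:ℝ) • (((d2.1:ℝ), (d2.2:ℝ)) : ℝ × ℝ) = ((0:ℝ), (1:ℝ)) := by
    rw [← hd1', ← hd2', ← happ]
    rw [← hc2]
    exact hBAe2
  have E1 : (c1.1:ℝ) * d1.1 + (c1.2:ℝ) * d2.1 = 1 := by
    have := congrArg Prod.fst he1; simpa using this
  have E2 : (c1.1:ℝ) * d1.2 + (c1.2:ℝ) * d2.2 = 0 := by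
    have := congrArg Prod.snd he1; simpa using this
  have E3 : (c2.1:ℝ) * d1.1 + (c2.2:ℝ) * d2.1 = 0 := by
    have := congrArg Prod.fst he2; simpa using this
  have E4 : (c2.1:ℝ) * d1.2 + (c2.2:ℝ) * d2.2 = 1 := by
    have := congrArg Prod.snd he2; simpa using this
  have hdetR : ((c1.1 * c2.2 - c2.1 * c1.2 : ℤ) : ℝ)
      * ((d1.1 * d2.2 - d2.1 * d1.2 : ℤ) : ℝ) = 1 := by
    push_cast
    linear_combination ((c2.1:ℝ) * d1.2 + (c2.2:ℝ) * d2.2) * E1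
      - ((c2.1:ℝ) * d1.1 + (c2.2:ℝ) * d2.1) * E2 + E4
  have hdetZ : (c1.1 * c2.2 - c2.1 * c1.2) * (d1.1 * d2.2 - d2.1 * d1.2) = 1 := by
    exact_mod_cast hdetR
  -- constancy of the (integer-valued, continuous) derivative entries
  have hcontF : ContinuousOn (fderiv ℝ Φ) W := hΦ.continuousOn_fderiv_of_isOpen hWopen le_rfl
  have hgcont : ∀ (v : ℝ × ℝ), ContinuousOn (fun z => fderiv ℝ Φ z v) W := fun v =>
    (ContinuousLinearMap.apply ℝ (ℝ × ℝ) v).continuous.comp_continuousOn hcontF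
  have hconst : ∀ (v : ℝ × ℝ),
      (∀ z ∈ W, ∃ mz : ℤ × ℤ, fderiv ℝ Φ z v = ((mz.1:ℝ), (mz.2:ℝ))) →
      ∀ z ∈ W, fderiv ℝ Φ z v = fderiv ℝ Φ w₀ v := by
    intro v hint z hz
    have h1 : (fderiv ℝ Φ z v).1 = (fderiv ℝ Φ w₀ v).1 :=
      const_of_int hpre (fun u => (fderiv ℝ Φ u v).1)
        (continuous_fst.comp_continuousOn (hgcont v))
        (fun u hu => (hint u hu).elim (fun mu hmu => ⟨mu.1, by show (fderiv ℝ Φ u v).1 = (mu.1:ℝ); rw [hmu]⟩)) z hz w₀ hw₀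
    have h2 : (fderiv ℝ Φ z v).2 = (fderiv ℝ Φ w₀ v).2 :=
      const_of_int hpre (fun u => (fderiv ℝ Φ u v).2)
        (continuous_snd.comp_continuousOn (hgcont v))
        (fun u hu => (hint u hu).elim (fun mu hmu => ⟨mu.2, by show (fderiv ℝ Φ u v).2 = (mu.2:ℝ); rw [hmu]⟩)) z hz w₀ hw₀
    exact Prod.ext h1 h2
  -- assemble
  refine ⟨!![c1.1, c2.1; c1.2, c2.2], ?_, ?_⟩
  · rw [Matrix.det_fin_two_of]
    exact IsUnit.of_mul_eq_one _ hdetZ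
  · intro w hw v
    have he1w : fderiv ℝ Φ w ((1:ℝ), (0:ℝ)) = ((c1.1:ℝ), (c1.2:ℝ)) := by
      rw [hconst ((1:ℝ), (0:ℝ)) hint10 w hw, hc1]
    have he2w : fderiv ℝ Φ w ((0:ℝ), (1:ℝ)) = ((c2.1:ℝ), (c2.2:ℝ)) := by
      rw [hconst ((0:ℝ), (1:ℝ)) hint01 w hw, hc2]
    rw [happ' (fderiv ℝ Φ w) v, he1w, he2w]
    simp only [Matrix.cons_val', Matrix.cons_val_zero, Matrix.cons_val_one, Matrix.head_cons,
      Matrix.empty_val', Matrix.cons_val_fin_one, Matrix.head_fin_const, Matrix.of_apply,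
      Prod.smul_mk, smul_eq_mul, Prod.mk_add_mk, Prod.mk.injEq]
    constructor <;> ring
end
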